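/- Let Δ = [a, b) × [c, d) be an axis-parallel half-open rectangle in ℝ² with Lebesgue measure μ(Δ) = (b − a)(d − c) ≤ 1/(3 + 2α). Then Δ contains at most one point of the lattice Γ, i.e., |Δ ∩ Γ| ≤ 1. -/
import Mathlib


open Set

/-- The inverse golden ratio `α = (√5 - 1)/2`. -/
noncomputable def invGolden : ℝ := (Real.sqrt 5 - 1) / 2

/-- The rotated lattice `Γ = Aℤ²`, where `A` has rows `(1, -α)` and `(α, 1)`,
i.e. `A(n,m)ᵀ = (n - αm, αn + m)ᵀ`. -/
def Γ : Set (ℝ × ℝ) :=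
  {p | ∃ n m : ℤ, p = ((n : ℝ) - invGolden * m, invGolden * n + m)}

lemma sqrt5_sq : Real.sqrt 5 ^ 2 = 5 := Real.sq_sqrt (by norm_num)

lemma invGolden_sq : invGolden ^ 2 = 1 - invGolden := by
  unfold invGolden; nlinarith [sqrt5_sq]

lemma invGolden_pos : 0 < invGolden := by
  unfold invGolden
  nlinarith [sqrt5_sq, Real.sqrt_nonneg 5]

lemma norm_form_ne_zero (p q : ℤ) (h : ¬(p = 0 ∧ q = 0)) :
    p ^ 2 + p * q - q ^ 2 ≠ 0 := by
  intro h0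
  rcases eq_or_ne q 0 with hq | hq
  · subst hq
    exact h ⟨by nlinarith, rfl⟩
  · have h0' : (p : ℝ) ^ 2 + (p : ℝ) * q - (q : ℝ) ^ 2 = 0 := by
      exact_mod_cast congrArg (fun z : ℤ => (z : ℝ)) h0
    have hq' : ((q : ℤ) : ℝ) ≠ 0 := Int.cast_ne_zero.mpr hq
    have h5 : (5 : ℝ) = (((2 * p + q : ℤ) : ℝ) / ((q : ℤ) : ℝ)) ^ 2 := by
      field_simp
      push_cast
      nlinarith [h0']
    have hs : Real.sqrt 5 = |((2 * p + q : ℤ) : ℝ) / ((q : ℤ) : ℝ)| := by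
      rw [h5, Real.sqrt_sq_eq_abs]
    have hirr : Irrational (Real.sqrt 5) := by
      have := (by norm_num : Nat.Prime 5).irrational_sqrt
      simpa using this
    exact hirr ⟨|((2 * p + q : ℤ) : ℚ) / ((q : ℤ) : ℚ)|, by push_cast at hs ⊢; exact hs.symm⟩

/-- Any axis-parallel half-open rectangle `[a,b) × [c,d)` of area at most
`1/(3 + 2α)` contains at most one point of the lattice `Γ`. -/
theorem small_rect_contains_at_most_one_lattice_point (a b c d : ℝ)
    (hab : a < b) (hcd : c < d)
    (harea : (b - a) * (d - c) ≤ 1 / (3 + 2 * invGolden)) :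
    ((Ico a b ×ˢ Ico c d) ∩ Γ).encard ≤ 1 := by
  rw [Set.encard_le_one_iff]
  rintro P Q ⟨hPr, n, m, rfl⟩ ⟨hQr, n', m', rfl⟩
  obtain ⟨⟨hP1a, hP1b⟩, ⟨hP2a, hP2b⟩⟩ := hPr
  obtain ⟨⟨hQ1a, hQ1b⟩, ⟨hQ2a, hQ2b⟩⟩ := hQr
  simp only at hP1a hP1b hP2a hP2b hQ1a hQ1b hQ2a hQ2b
  by_cases h0 : n = n' ∧ m = m'
  · rw [h0.1, h0.2]
  exfalso
  set p : ℤ := n - n' with hp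
  set q : ℤ := m - m' with hq
  have hne : ¬(p = 0 ∧ q = 0) := by
    intro ⟨h1, h2⟩
    exact h0 ⟨by omega, by omega⟩
  have hk := norm_form_ne_zero p q hne
  have hk1 : (1 : ℝ) ≤ |(p : ℝ) ^ 2 + (p : ℝ) * q - (q : ℝ) ^ 2| := by
    have := Int.one_le_abs hk
    have : (1 : ℝ) ≤ |((p ^ 2 + p * q - q ^ 2 : ℤ) : ℝ)| := by exact_mod_cast this
    convert this using 2
    push_cast
    ring
  have hαpos := invGolden_pos
  have hαsq := invGolden_sq
  have hx : |(p : ℝ) - invGolden * q| < b - a := by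
    rw [abs_lt]
    constructor <;> (push_cast [hp, hq]; nlinarith [hP1a, hP1b, hQ1a, hQ1b])
  have hy : |invGolden * p + (q : ℝ)| < d - c := by
    rw [abs_lt]
    constructor <;> (push_cast [hp, hq]; nlinarith [hP2a, hP2b, hQ2a, hQ2b])
  have hprod : ((p : ℝ) - invGolden * q) * (invGolden * p + q)
      = invGolden * ((p : ℝ) ^ 2 + (p : ℝ) * q - (q : ℝ) ^ 2) := by
    linear_combination (-(p : ℝ) * (q : ℝ)) * hαsq
  have hlow : invGolden ≤ |(p : ℝ) - invGolden * q| * |invGolden * p + (q : ℝ)| := by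
    rw [← abs_mul, hprod, abs_mul, abs_of_pos hαpos]
    nlinarith [hk1]
  have hup : |(p : ℝ) - invGolden * q| * |invGolden * p + (q : ℝ)| < (b - a) * (d - c) :=
    mul_lt_mul'' hx hy (abs_nonneg _) (abs_nonneg _)
  have hfin : 1 / (3 + 2 * invGolden) < invGolden := by
    rw [div_lt_iff₀ (by linarith)]
    nlinarith [hαsq]
  linarith
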